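/- arXiv:1502.04759 — 6 statements merged into one kernel-verified Lean document; each statement's English description precedes it below -/
import Mathlib

section
/- Randomized coordinate descent on a convex function satisfies the sublinear rate E[f(x^k)] - f* ≤ 2n·L_max·R₀²/k for all k ≥ 1, where the indices are chosen uniformly at random with replacement and the steplength is 1/L_max. -/
set_option maxHeartbeats 1000000

lemma line_deriv {n : ℕ} (f : EuclideanSpace ℝ (Fin n) → ℝ)
    (g : EuclideanSpace ℝ (Fin n) → EuclideanSpace ℝ (Fin n))
    (hdiff : ∀ x, HasGradientAt f (g x) x)
    (x : EuclideanSpace ℝ (Fin n)) (i : Fin n) (t : ℝ) :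
    HasDerivAt (fun s : ℝ => f (x + s • EuclideanSpace.single i 1))
      (g (x + t • EuclideanSpace.single i 1) i) t := by
  set v := EuclideanSpace.single i (1:ℝ) with hv
  have hc : HasDerivAt (fun s : ℝ => x + s • v) v t := by
    simpa using (hasDerivAt_id t).smul_const v |>.const_add x
  have hf := (hdiff (x + t • v)).hasFDerivAt
  have h2 := hf.comp_hasDerivAt t hc
  have : (InnerProductSpace.toDual ℝ (EuclideanSpace ℝ (Fin n)) (g (x + t • v))) v
      = g (x + t • v) i := by
    rw [InnerProductSpace.toDual_apply_apply, hv, EuclideanSpace.inner_single_right]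
    simp
  simp only [this] at h2
  exact h2

lemma descent {n : ℕ} (f : EuclideanSpace ℝ (Fin n) → ℝ)
    (g : EuclideanSpace ℝ (Fin n) → EuclideanSpace ℝ (Fin n))
    (hdiff : ∀ x, HasGradientAt f (g x) x)
    (Lmax : ℝ)
    (hLip : ∀ (x : EuclideanSpace ℝ (Fin n)) (i : Fin n) (t : ℝ),
      |g (x + t • EuclideanSpace.single i 1) i - g x i| ≤ Lmax * |t|)
    (x : EuclideanSpace ℝ (Fin n)) (i : Fin n) (t : ℝ) :
    f (x + t • EuclideanSpace.single i 1) ≤ f x + g x i * t + Lmax / 2 * t ^ 2 := by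
  set e := EuclideanSpace.single i (1:ℝ) with he
  set φ : ℝ → ℝ := fun s => f (x + s • e) with hφ
  have hd : ∀ s : ℝ, HasDerivAt φ (g (x + s • e) i) s := fun s =>
    line_deriv f g hdiff x i s
  set ψ : ℝ → ℝ := fun s => f x + g x i * s + Lmax / 2 * s ^ 2 - φ s with hψ
  have hdψ : ∀ s : ℝ, HasDerivAt ψ (g x i + Lmax * s - g (x + s • e) i) s := by
    intro s
    have h1 : HasDerivAt (fun s : ℝ => f x + g x i * s + Lmax / 2 * s ^ 2)
        (g x i + Lmax * s) s := by
      have := ((hasDerivAt_id s).const_mul (g x i)).const_add (f x)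
      have h2 := ((hasDerivAt_pow 2 s).const_mul (Lmax / 2))
      exact (this.add h2).congr_deriv (by ring)
    exact h1.sub (hd s)
  have hψ0 : ψ 0 = 0 := by simp [hψ, hφ]
  have key : 0 ≤ ψ t := by
    rcases le_or_gt 0 t with ht | ht
    · have hmono : MonotoneOn ψ (Set.Icc 0 t) := by
        apply monotoneOn_of_hasDerivWithinAt_nonneg (convex_Icc 0 t)
          (fun s _ => (hdψ s).continuousAt.continuousWithinAt)
          (fun s _ => (hdψ s).hasDerivWithinAt)
        intro s hs
        rw [interior_Icc] at hs
        have h1 := hLip x i s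
        rw [abs_of_nonneg hs.1.le] at h1
        have := (abs_le.mp h1).2
        simp only [← he] at this ⊢
        linarith
      have := hmono (Set.left_mem_Icc.mpr ht) (Set.right_mem_Icc.mpr ht) ht
      rwa [hψ0] at this
    · have hmono : MonotoneOn (fun s => -ψ s) (Set.Icc t 0) := by
        apply monotoneOn_of_hasDerivWithinAt_nonneg (convex_Icc t 0)
          (fun s _ => ((hdψ s).neg).continuousAt.continuousWithinAt)
          (fun s _ => ((hdψ s).neg).hasDerivWithinAt)
        intro s hs
        rw [interior_Icc] at hs
        have h1 := hLip x i s
        rw [abs_of_nonpos hs.2.le] at h1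
        have := (abs_le.mp h1).1
        simp only [← he] at this ⊢
        linarith
      have := hmono (Set.left_mem_Icc.mpr ht.le) (Set.right_mem_Icc.mpr ht.le) ht.le
      simp only [hψ0, neg_zero] at this
      linarith
  have : φ t ≤ f x + g x i * t + Lmax / 2 * t ^ 2 := by
    simp only [hψ] at key; linarith
  simpa [hφ, he] using this

lemma grad_ineq {n : ℕ} (f : EuclideanSpace ℝ (Fin n) → ℝ)
    (g : EuclideanSpace ℝ (Fin n) → EuclideanSpace ℝ (Fin n))
    (hconv : ConvexOn ℝ Set.univ f)
    (hdiff : ∀ x, HasGradientAt f (g x) x)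
    (x y : EuclideanSpace ℝ (Fin n)) :
    f x + (inner ℝ (g x) (y - x) : ℝ) ≤ f y := by
  set A := (AffineMap.lineMap x y : ℝ →ᵃ[ℝ] EuclideanSpace ℝ (Fin n)) with hA
  have hψconv : ConvexOn ℝ Set.univ (f ∘ A) := by
    simpa using hconv.comp_affineMap A
  have hc : HasDerivAt (fun s : ℝ => A s) (y - x) 0 := by
    simp only [hA, AffineMap.coe_lineMap]
    simpa using ((hasDerivAt_id (0:ℝ)).smul_const (y - x)).add_const x
  have hder : HasDerivAt (f ∘ A) (inner ℝ (g x) (y - x) : ℝ) 0 := by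
    have hf := (hdiff (A 0)).hasFDerivAt
    have h2 := hf.comp_hasDerivAt 0 hc
    have hA0 : A 0 = x := by simp [hA]
    simpa [hA0, InnerProductSpace.toDual_apply_apply] using h2
  have := hψconv.le_slope_of_hasDerivAt (Set.mem_univ 0) (Set.mem_univ 1) zero_lt_one hder
  rw [slope_def_field] at this
  have hA1 : A 1 = y := by simp [hA]
  have hA0 : A 0 = x := by simp [hA]
  simp only [Function.comp, hA1, hA0] at this
  linarith [this]

lemma step_bound {C u : ℝ} (hC : 0 < C) : u - u ^ 2 / C ≤ C := by
  have h1 : u - u ^ 2 / C = (C * u - u ^ 2) / C := by field_simp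
  rw [h1, div_le_iff₀ hC]
  nlinarith [sq_nonneg (u - C / 2), sq_nonneg C, hC.le]

lemma rate_aux (C : ℝ) (hC : 0 < C) (a : ℕ → ℝ) (ha : ∀ m, 0 ≤ a m)
    (hrec : ∀ m, a (m + 1) ≤ a m - (a m) ^ 2 / C) :
    ∀ m : ℕ, 1 ≤ m → a m ≤ C / m := by
  intro m hm
  induction m, hm using Nat.le_induction with
  | base =>
    have := hrec 0
    have h2 := step_bound (u := a 0) hC
    simpa using this.trans h2
  | succ m hm ih =>
    set u := a m with hu
    set M := (m : ℝ) with hM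
    have hM1 : (1 : ℝ) ≤ M := by rw [hM]; exact_mod_cast hm
    have hM0 : (0 : ℝ) < M := by linarith
    have hu0 : 0 ≤ u := ha m
    have huM : u * M ≤ C := by
      have := ih
      rw [le_div_iff₀ hM0] at this
      exact this
    have key : u - u ^ 2 / C ≤ C / (M + 1) := by
      have h1 : u - u ^ 2 / C = (C * u - u ^ 2) / C := by field_simp
      rw [h1, div_le_div_iff₀ hC (by linarith : (0:ℝ) < M + 1)]
      have hp1 : 0 ≤ (C - u * M) * u := mul_nonneg (by linarith) hu0
      have hp2 : 0 ≤ (M - 1) * ((C - u * M) * u) := mul_nonneg (by linarith) hp1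
      nlinarith [sq_nonneg (C - u * M), sq_nonneg u, hp2]
    have := (hrec m).trans key
    have hcast : ((m + 1 : ℕ) : ℝ) = M + 1 := by push_cast [hM]; ring
    rw [hcast]
    exact this

/-- Sublinear rate of randomized coordinate descent on a convex function:
`E[f(x^k)] - f* ≤ 2 n Lmax R₀² / k`. The expectation over the i.i.d. uniform
indices `i_0,…,i_{k-1}` is written as an average over all `ω : Fin k → Fin n`. -/
theorem rcd_sublinear_rate (n : ℕ) (hn : 0 < n)
    (f : EuclideanSpace ℝ (Fin n) → ℝ)
    (g : EuclideanSpace ℝ (Fin n) → EuclideanSpace ℝ (Fin n))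
    (hconv : ConvexOn ℝ Set.univ f)
    (hdiff : ∀ x, HasGradientAt f (g x) x)
    (Lmax : ℝ) (hLmax : 0 < Lmax)
    (hLip : ∀ (x : EuclideanSpace ℝ (Fin n)) (i : Fin n) (t : ℝ),
      |g (x + t • EuclideanSpace.single i 1) i - g x i| ≤ Lmax * |t|)
    (fstar : ℝ) (hfstar : ∀ x, fstar ≤ f x) (hattain : ∃ x, f x = fstar)
    (x0 : EuclideanSpace ℝ (Fin n)) (R0 : ℝ)
    (hR0 : ∀ xstar, f xstar = fstar → ∀ x, f x ≤ f x0 → ‖x - xstar‖ ≤ R0)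
    (X : (ℕ → Fin n) → ℕ → EuclideanSpace ℝ (Fin n))
    (hX0 : ∀ ω, X ω 0 = x0)
    (hXs : ∀ ω k, X ω (k + 1) =
      X ω k - (1 / Lmax) • (g (X ω k) (ω k)) • EuclideanSpace.single (ω k) 1)
    (k : ℕ) (hk : 1 ≤ k) :
    ((n : ℝ) ^ k)⁻¹ *
        (∑ ω : Fin k → Fin n,
          f (X (fun j => if h : j < k then ω ⟨j, h⟩ else ⟨0, hn⟩) k)) - fstar
      ≤ 2 * n * Lmax * R0 ^ 2 / k := by
  obtain ⟨xs, hxs⟩ := hattain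
  have hnR : (0:ℝ) < (n:ℝ) := by exact_mod_cast hn
  -- the one-step map
  set step : EuclideanSpace ℝ (Fin n) → Fin n → EuclideanSpace ℝ (Fin n) :=
    fun y i => y - (1 / Lmax) • (g y i) • EuclideanSpace.single i 1 with hstep
  have hXs' : ∀ σ (m : ℕ), X σ (m + 1) = step (X σ m) (σ m) := fun σ m => hXs σ m
  -- per-step decrease
  have h_step_le : ∀ y i, f (step y i) ≤ f y - (g y i) ^ 2 / (2 * Lmax) := by
    intro y i
    have hrw : step y i = y + (-(g y i / Lmax)) • EuclideanSpace.single i 1 := by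
      simp only [hstep]
      rw [sub_eq_add_neg, ← neg_smul, smul_smul]
      ring_nf
    rw [hrw]
    have hde := descent f g hdiff Lmax hLip y i (-(g y i / Lmax))
    have hL := hLmax.ne'
    calc f (y + (-(g y i / Lmax)) • EuclideanSpace.single i 1)
        ≤ f y + g y i * (-(g y i / Lmax)) + Lmax / 2 * (-(g y i / Lmax)) ^ 2 := hde
      _ = f y - (g y i) ^ 2 / (2 * Lmax) := by field_simp; ring
  -- the norm of the gradient as a sum of squares
  have h_norm_sq : ∀ y : EuclideanSpace ℝ (Fin n), ∑ i, (g y i) ^ 2 = ‖g y‖ ^ 2 := by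
    intro y
    rw [← real_inner_self_eq_norm_sq, PiLp.inner_apply]
    simp [sq]
  -- lower bound from convexity
  have h_lower : ∀ y, f y ≤ f x0 → f y - fstar ≤ ‖g y‖ * R0 := by
    intro y hy
    have h1 := grad_ineq f g hconv hdiff y xs
    rw [hxs] at h1
    have h2 : (inner ℝ (g y) (y - xs) : ℝ) ≤ ‖g y‖ * ‖y - xs‖ := real_inner_le_norm _ _
    have h3 : ‖y - xs‖ ≤ R0 := hR0 xs hxs y hy
    have h4 : (inner ℝ (g y) (y - xs) : ℝ) = -(inner ℝ (g y) (xs - y) : ℝ) := by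
      rw [← inner_neg_right]; congr 1; abel
    nlinarith [norm_nonneg (g y), mul_le_mul_of_nonneg_left h3 (norm_nonneg (g y))]
  -- R0 is nonnegative
  have hR0nn : 0 ≤ R0 := le_trans (norm_nonneg _) (hR0 xs hxs x0 le_rfl)
  -- f decreases along every path
  have h_f_mono : ∀ (σ : ℕ → Fin n) (m : ℕ), f (X σ (m + 1)) ≤ f (X σ m) := by
    intro σ m
    rw [hXs' σ m]
    have h5 := h_step_le (X σ m) (σ m)
    have hg : 0 ≤ (g (X σ m) (σ m)) ^ 2 / (2 * Lmax) := by positivity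
    linarith
  have h_f_le_x0 : ∀ (σ : ℕ → Fin n) (m : ℕ), f (X σ m) ≤ f x0 := by
    intro σ m
    induction m with
    | zero => rw [hX0]
    | succ m ih => exact le_trans (h_f_mono σ m) ih
  -- path only depends on initial segment
  have hdep : ∀ (m : ℕ) (σ σ' : ℕ → Fin n), (∀ j, j < m → σ j = σ' j) → X σ m = X σ' m := by
    intro m
    induction m with
    | zero => intro σ σ' _; rw [hX0, hX0]
    | succ m ih =>
      intro σ σ' h
      rw [hXs, hXs, ih σ σ' (fun j hj => h j (Nat.lt_succ_of_lt hj)),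
        h m (Nat.lt_succ_self m)]
  -- the extension of a finite word
  set ex : ∀ m : ℕ, (Fin m → Fin n) → (ℕ → Fin n) :=
    fun m ω j => if h : j < m then ω ⟨j, h⟩ else ⟨0, hn⟩ with hex
  -- sum of (f - fstar) over paths
  set S : ℕ → ℝ := fun m => ∑ ω : Fin m → Fin n, (f (X (ex m ω) m) - fstar) with hS
  have hS_nonneg : ∀ m, 0 ≤ S m := by
    intro m
    apply Finset.sum_nonneg
    intro ω _
    have := hfstar (X (ex m ω) m)
    linarith
  -- rewrite the goal
  have hgoal : ((n : ℝ) ^ k)⁻¹ *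
        (∑ ω : Fin k → Fin n,
          f (X (fun j => if h : j < k then ω ⟨j, h⟩ else ⟨0, hn⟩) k)) - fstar
      = S k / (n : ℝ) ^ k := by
    simp only [hS, hex]
    rw [Finset.sum_sub_distrib, Finset.sum_const, Finset.card_univ, nsmul_eq_mul,
      Fintype.card_fun, Fintype.card_fin, Fintype.card_fin]
    push_cast
    have hne : ((n:ℝ))^k ≠ 0 := by positivity
    field_simp
  rw [hgoal]
  -- sum decomposition over the last step
  have hS_decomp : ∀ m : ℕ, S (m + 1)
      = ∑ ω : Fin m → Fin n, ∑ i : Fin n, (f (step (X (ex m ω) m) i) - fstar) := by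
    intro m
    show (∑ ω : Fin (m+1) → Fin n, (f (X (ex (m+1) ω) (m+1)) - fstar)) = _
    set e := (Fin.snocEquiv (fun _ : Fin (m+1) => Fin n)) with he
    rw [← Fintype.sum_equiv e
      (fun p => f (X (ex (m+1) (e p)) (m+1)) - fstar)
      (fun ω' => f (X (ex (m+1) ω') (m+1)) - fstar) (fun p => rfl)]
    rw [Fintype.sum_prod_type, Finset.sum_comm]
    apply Finset.sum_congr rfl; intro ω _
    apply Finset.sum_congr rfl; intro i _
    congr 2
    have hsnoc : ex (m+1) (e (i, ω))
        = fun j => if h : j < m + 1 then Fin.snoc (α := fun _ => Fin n) ω i ⟨j, h⟩ else ⟨0, hn⟩ := by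
      rw [hex]; rfl
    rw [hXs']
    have hlast : (ex (m+1) (e (i, ω))) m = i := by
      rw [hsnoc]
      simp only [dif_pos (Nat.lt_succ_self m)]
      have : (⟨m, Nat.lt_succ_self m⟩ : Fin (m+1)) = Fin.last m := rfl
      rw [this, Fin.snoc_last]
    have hagree : X (ex (m+1) (e (i, ω))) m = X (ex m ω) m := by
      apply hdep
      intro j hj
      rw [hsnoc, hex]
      simp only [dif_pos (Nat.lt_succ_of_lt hj), dif_pos hj]
      have : (⟨j, Nat.lt_succ_of_lt hj⟩ : Fin (m+1)) = Fin.castSucc ⟨j, hj⟩ := rfl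
      rw [this, Fin.snoc_castSucc]
    rw [hagree, hlast]
  rcases eq_or_lt_of_le hR0nn with hR0z | hR0pos
  · -- degenerate case R0 = 0
    have hSk : S k = 0 := by
      apply le_antisymm _ (hS_nonneg k)
      apply Finset.sum_nonpos
      intro ω _
      have h1 := h_lower (X (ex k ω) k) (h_f_le_x0 _ k)
      rw [← hR0z, mul_zero] at h1
      linarith
    rw [hSk, ← hR0z]
    norm_num
  · -- main case R0 > 0
    set C : ℝ := 2 * (n : ℝ) * Lmax * R0 ^ 2 with hC_def
    have hC : 0 < C := by positivity
    -- pointwise bound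
    have h_point : ∀ y, f y ≤ f x0 →
        ∑ i : Fin n, (f (step y i) - fstar)
          ≤ (n : ℝ) * (f y - fstar) - (f y - fstar) ^ 2 / (2 * Lmax * R0 ^ 2) := by
      intro y hy
      have h1 : ∑ i : Fin n, (f (step y i) - fstar)
          ≤ ∑ i : Fin n, (f y - (g y i) ^ 2 / (2 * Lmax) - fstar) :=
        Finset.sum_le_sum (fun i _ => by have := h_step_le y i; linarith)
      have h2 : ∑ i : Fin n, (f y - (g y i) ^ 2 / (2 * Lmax) - fstar)
          = (n : ℝ) * (f y - fstar) - (∑ i : Fin n, (g y i) ^ 2) / (2 * Lmax) := by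
        rw [Finset.sum_sub_distrib, Finset.sum_sub_distrib, Finset.sum_const, Finset.sum_const,
          Finset.card_univ, Fintype.card_fin, ← Finset.sum_div]
        push_cast
        ring
      have hnn : 0 ≤ f y - fstar := by linarith [hfstar y]
      have h3 : (f y - fstar) ^ 2 ≤ (∑ i : Fin n, (g y i) ^ 2) * R0 ^ 2 := by
        rw [h_norm_sq y]
        have hl := h_lower y hy
        nlinarith [norm_nonneg (g y), hR0pos.le]
      have h4 : (f y - fstar) ^ 2 / (2 * Lmax * R0 ^ 2)
          ≤ (∑ i : Fin n, (g y i) ^ 2) / (2 * Lmax) := by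
        rw [div_le_div_iff₀ (by positivity) (by positivity)]
        nlinarith [mul_le_mul_of_nonneg_right h3 (by positivity : (0:ℝ) ≤ 2 * Lmax)]
      linarith [h1, h2 ▸ h1]
    -- recursion for S
    have hS_rec : ∀ m : ℕ, S (m + 1)
        ≤ (n : ℝ) * S m - (S m) ^ 2 / (2 * Lmax * R0 ^ 2 * (n : ℝ) ^ m) := by
      intro m
      rw [hS_decomp m]
      have h5 : ∑ ω : Fin m → Fin n, ∑ i : Fin n, (f (step (X (ex m ω) m) i) - fstar)
          ≤ ∑ ω : Fin m → Fin n, ((n : ℝ) * (f (X (ex m ω) m) - fstar)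
            - (f (X (ex m ω) m) - fstar) ^ 2 / (2 * Lmax * R0 ^ 2)) :=
        Finset.sum_le_sum (fun ω _ => h_point _ (h_f_le_x0 _ m))
      have h6 : ∑ ω : Fin m → Fin n, ((n : ℝ) * (f (X (ex m ω) m) - fstar)
            - (f (X (ex m ω) m) - fstar) ^ 2 / (2 * Lmax * R0 ^ 2))
          = (n : ℝ) * S m
            - (∑ ω : Fin m → Fin n, (f (X (ex m ω) m) - fstar) ^ 2) / (2 * Lmax * R0 ^ 2) := by
        rw [Finset.sum_sub_distrib, ← Finset.mul_sum, ← Finset.sum_div]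
      have h7 : (S m) ^ 2 ≤ (n : ℝ) ^ m * ∑ ω : Fin m → Fin n, (f (X (ex m ω) m) - fstar) ^ 2 := by
        have := sq_sum_le_card_mul_sum_sq (s := (Finset.univ : Finset (Fin m → Fin n)))
          (f := fun ω => f (X (ex m ω) m) - fstar)
        rw [Finset.card_univ, Fintype.card_fun, Fintype.card_fin, Fintype.card_fin] at this
        push_cast at this
        exact this
      have h8 : (S m) ^ 2 / (2 * Lmax * R0 ^ 2 * (n : ℝ) ^ m)
          ≤ (∑ ω : Fin m → Fin n, (f (X (ex m ω) m) - fstar) ^ 2) / (2 * Lmax * R0 ^ 2) := by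
        rw [div_le_div_iff₀ (by positivity) (by positivity)]
        nlinarith [mul_le_mul_of_nonneg_right h7 (by positivity : (0:ℝ) ≤ 2 * Lmax * R0 ^ 2)]
      calc ∑ ω : Fin m → Fin n, ∑ i : Fin n, (f (step (X (ex m ω) m) i) - fstar)
          ≤ (n : ℝ) * S m
            - (∑ ω : Fin m → Fin n, (f (X (ex m ω) m) - fstar) ^ 2) / (2 * Lmax * R0 ^ 2) := by
            rw [← h6]; exact h5
        _ ≤ (n : ℝ) * S m - (S m) ^ 2 / (2 * Lmax * R0 ^ 2 * (n : ℝ) ^ m) := by linarith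
    -- recursion for the averages
    set a : ℕ → ℝ := fun m => S m / (n : ℝ) ^ m with ha_def
    have ha_nonneg : ∀ m, 0 ≤ a m := fun m => div_nonneg (hS_nonneg m) (by positivity)
    have hrec : ∀ m, a (m + 1) ≤ a m - (a m) ^ 2 / C := by
      intro m
      have h := hS_rec m
      have hP : (0:ℝ) < (n : ℝ) ^ m := by positivity
      show S (m+1) / (n : ℝ) ^ (m+1) ≤ S m / (n : ℝ) ^ m - (S m / (n : ℝ) ^ m) ^ 2 / C
      have heq : S m / (n : ℝ) ^ m - (S m / (n : ℝ) ^ m) ^ 2 / C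
          = ((n : ℝ) * S m - (S m) ^ 2 / (2 * Lmax * R0 ^ 2 * (n : ℝ) ^ m)) / (n : ℝ) ^ (m+1) := by
        rw [hC_def]
        field_simp
        ring
      rw [heq]
      gcongr
    have hfin := rate_aux C hC a ha_nonneg hrec k hk
    exact hfin
end

section
/- The randomized Kaczmarz iteration for a consistent linear system Aw = b with normalized rows satisfies E‖w^k - P(w^k)‖² ≤ (1 - λ_min,nz/m)^k ‖w⁰ - P(w⁰)‖², where P denotes projection onto the solution set and λ_min,nz is the smallest nonzero eigenvalue of AAᵀ. -/
open scoped RealInnerProductSpace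

lemma mem_rowspace_of_orth {m n : ℕ} (A : Matrix (Fin m) (Fin n) ℝ) (v : Fin n → ℝ)
    (hv : ∀ z : Fin n → ℝ, A.mulVec z = 0 → ∑ j, v j * z j = 0) :
    ∃ u : Fin m → ℝ, A.transpose.mulVec u = v := by
  classical
  let toE : (Fin n → ℝ) → EuclideanSpace ℝ (Fin n) := fun x => WithLp.toLp 2 x
  let U : Submodule ℝ (EuclideanSpace ℝ (Fin n)) :=
    { carrier := {v | ∃ u : Fin m → ℝ, toE (A.transpose.mulVec u) = v}
      add_mem' := by
        rintro a c ⟨ua, rfl⟩ ⟨uc, rfl⟩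
        exact ⟨ua + uc, by simp [toE, Matrix.mulVec_add]⟩
      zero_mem' := ⟨0, by simp [toE]⟩
      smul_mem' := by
        rintro r a ⟨ua, rfl⟩
        exact ⟨r • ua, by simp [toE, Matrix.mulVec_smul]⟩ }
  obtain ⟨y, hy, z, hz, hvyz⟩ := U.exists_add_mem_mem_orthogonal (toE v)
  have hrow : ∀ i : Fin m, toE (fun j => A i j) ∈ U := by
    intro i
    refine ⟨Pi.single i 1, ?_⟩
    apply congrArg toE
    funext j
    simp [Matrix.mulVec, dotProduct, Pi.single_apply, Matrix.transpose_apply]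
  have hAz : A.mulVec z = 0 := by
    funext i
    have h0 : ⟪toE (fun j => A i j), z⟫ = 0 :=
      (Submodule.mem_orthogonal U z).mp hz _ (hrow i)
    simpa [toE, PiLp.inner_apply, RCLike.inner_apply, Matrix.mulVec, dotProduct, mul_comm] using h0
  have hzz : ⟪z, z⟫ = 0 := by
    have h1 : ⟪toE v, z⟫ = 0 := by
      have := hv z hAz
      simpa [toE, PiLp.inner_apply, RCLike.inner_apply, mul_comm] using this
    have h2 : ⟪y, z⟫ = 0 := (Submodule.mem_orthogonal U z).mp hz _ hy
    have h3 : ⟪y + z, z⟫ = 0 := by rw [← hvyz]; exact h1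
    rw [inner_add_left, h2, zero_add] at h3
    exact h3
  have hz0 : z = 0 := by rwa [inner_self_eq_zero] at hzz
  rw [hz0, add_zero] at hvyz
  obtain ⟨u, hu⟩ := hvyz ▸ hy
  exact ⟨u, congrArg WithLp.ofLp hu⟩


/-- Expected linear convergence of the randomized Kaczmarz method:
`E‖w^k - P(w^k)‖² ≤ (1 - λ_min,nz/m)^k ‖w⁰ - P(w⁰)‖²`, where `P` projects onto the
solution set of the consistent system `Aw = b` with unit-norm rows, and `lmin` is the
smallest nonzero eigenvalue of `AAᵀ` (characterized by its quadratic-form lower bound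
on the row space of `A`). -/
theorem randomized_kaczmarz_linear_rate (m n : ℕ) (hm : 0 < m)
    (A : Matrix (Fin m) (Fin n) ℝ) (b : Fin m → ℝ)
    (hnorm : ∀ i, ∑ j, (A i j) ^ 2 = 1)
    (hfeas : ∃ w, A.mulVec w = b)
    (P : (Fin n → ℝ) → (Fin n → ℝ))
    (hPsol : ∀ w, A.mulVec (P w) = b)
    (hPproj : ∀ w v, A.mulVec v = b → ∑ j, (w j - P w j) ^ 2 ≤ ∑ j, (w j - v j) ^ 2)
    (lmin : ℝ) (hlmin : 0 < lmin)
    (hlmin2 : ∀ v : Fin n → ℝ, (∃ u : Fin m → ℝ, A.transpose.mulVec u = v) →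
      lmin * ∑ j, (v j) ^ 2 ≤ ∑ i, (A.mulVec v i) ^ 2)
    (w0 : Fin n → ℝ)
    (W : (ℕ → Fin m) → ℕ → (Fin n → ℝ))
    (hW0 : ∀ ω, W ω 0 = w0)
    (hWs : ∀ ω k, W ω (k + 1) =
      fun j => W ω k j - (A.mulVec (W ω k) (ω k) - b (ω k)) * A (ω k) j)
    (k : ℕ) :
    ((m : ℝ) ^ k)⁻¹ *
        (∑ ω : Fin k → Fin m,
          ∑ j, (W (fun l => if h : l < k then ω ⟨l, h⟩ else ⟨0, hm⟩) k j
                 - P (W (fun l => if h : l < k then ω ⟨l, h⟩ else ⟨0, hm⟩) k) j) ^ 2)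
      ≤ (1 - lmin / m) ^ k * ∑ j, (w0 j - P w0 j) ^ 2 := by
  classical
  have hm' : (0 : ℝ) < m := by exact_mod_cast hm
  set d : (Fin n → ℝ) → ℝ := fun w => ∑ j, (w j - P w j) ^ 2 with hd
  have hdnn : ∀ w, 0 ≤ d w := fun w => Finset.sum_nonneg fun j _ => sq_nonneg _
  set step : Fin m → (Fin n → ℝ) → (Fin n → ℝ) :=
    fun i w j => w j - (A.mulVec w i - b i) * A i j with hstep
  -- one-step expected decrease
  have onestep : ∀ w : Fin n → ℝ, ∑ i : Fin m, d (step i w) ≤ ((m : ℝ) - lmin) * d w := by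
    intro w
    set p := P w with hp
    set r : Fin m → ℝ := fun i => A.mulVec w i - b i with hr
    have hrw : ∀ i, r i = ∑ j, A i j * (w j - p j) := by
      intro i
      have hb : A.mulVec p i = b i := by rw [hPsol w]
      simp only [hr, Matrix.mulVec, dotProduct] at hb ⊢
      rw [← hb]
      simp [mul_sub, Finset.sum_sub_distrib]
    have h1 : ∀ i, d (step i w) ≤ d w - (r i) ^ 2 := by
      intro i
      have h2 := hPproj (step i w) p (hPsol w)
      have h3 : ∑ j, (step i w j - p j) ^ 2 = d w - (r i) ^ 2 := by
        have expand : ∀ j, (step i w j - p j) ^ 2 =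
            (w j - p j) ^ 2 - 2 * r i * (A i j * (w j - p j)) + (r i) ^ 2 * (A i j) ^ 2 := by
          intro j; simp only [hstep, hr]; ring
        rw [Finset.sum_congr rfl fun j _ => expand j, Finset.sum_add_distrib,
          Finset.sum_sub_distrib, ← Finset.mul_sum, ← Finset.mul_sum, ← hrw i, hnorm i]
        simp only [hd]
        ring
      calc d (step i w) ≤ ∑ j, (step i w j - p j) ^ 2 := h2
        _ = d w - (r i) ^ 2 := h3
    -- residual lower bound via row space
    have hmem : ∃ u : Fin m → ℝ, A.transpose.mulVec u = fun j => w j - p j := by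
      apply mem_rowspace_of_orth
      intro z hz
      set c := ∑ j, (w j - p j) * z j with hc
      set s := ∑ j, (z j) ^ 2 with hs
      have key : ∀ t : ℝ, 0 ≤ t ^ 2 * s - 2 * t * c := by
        intro t
        have hsol : A.mulVec (fun j => p j + t * z j) = b := by
          have : (fun j => p j + t * z j) = p + t • z := rfl
          rw [this, Matrix.mulVec_add, Matrix.mulVec_smul, hz, hPsol]
          simp
        have h4 := hPproj w (fun j => p j + t * z j) hsol
        have h5 : ∑ j, (w j - (p j + t * z j)) ^ 2 = d w - 2 * t * c + t ^ 2 * s := by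
          have expand : ∀ j, (w j - (p j + t * z j)) ^ 2 =
              (w j - p j) ^ 2 - 2 * t * ((w j - p j) * z j) + t ^ 2 * (z j) ^ 2 := by
            intro j; ring
          rw [Finset.sum_congr rfl fun j _ => expand j, Finset.sum_add_distrib,
            Finset.sum_sub_distrib, ← Finset.mul_sum, ← Finset.mul_sum]
        rw [h5] at h4
        simp only [hd] at h4
        linarith
      have hs0 : 0 ≤ s := Finset.sum_nonneg fun j _ => sq_nonneg _
      rcases hs0.eq_or_lt' with hse | hsp
      · have hsum0 : ∑ j, (z j) ^ 2 = 0 := by rw [← hs]; exact hse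
        have hz0 : ∀ j, z j = 0 := by
          intro j
          have h10 := (Finset.sum_eq_zero_iff_of_nonneg (fun j _ => sq_nonneg (z j))).mp hsum0
          exact pow_eq_zero_iff (two_ne_zero) |>.mp (h10 j (Finset.mem_univ j))
        simp [hc, hz0]
      · have h6 := key (c / s)
        have h7 : (c / s) ^ 2 * s - 2 * (c / s) * c = -(c ^ 2) / s := by
          field_simp
          ring
        rw [h7] at h6
        have h11 : (0:ℝ) ≤ -(c ^ 2) := by
          have h12 := mul_nonneg h6 hsp.le
          rwa [div_mul_cancel₀ _ (ne_of_gt hsp)] at h12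
        have hc0 : c = 0 := by nlinarith [sq_nonneg c]
        exact hc0
    have h8 := hlmin2 _ hmem
    have h9 : ∀ i, A.mulVec (fun j => w j - p j) i = r i := by
      intro i
      have : (fun j => w j - p j) = w - p := rfl
      rw [this, Matrix.mulVec_sub, hPsol]
      simp [hr]
    have h10 : lmin * d w ≤ ∑ i, (r i) ^ 2 := by
      calc lmin * d w = lmin * ∑ j, ((fun j => w j - p j) j) ^ 2 := by rfl
        _ ≤ ∑ i, (A.mulVec (fun j => w j - p j) i) ^ 2 := h8
        _ = ∑ i, (r i) ^ 2 := by simp_rw [h9]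
    calc ∑ i : Fin m, d (step i w)
        ≤ ∑ i : Fin m, (d w - (r i) ^ 2) := Finset.sum_le_sum fun i _ => h1 i
      _ = (m : ℝ) * d w - ∑ i, (r i) ^ 2 := by
          rw [Finset.sum_sub_distrib]
          simp [mul_comm]
      _ ≤ (m : ℝ) * d w - lmin * d w := by linarith
      _ = ((m : ℝ) - lmin) * d w := by ring
  -- lmin ≤ m
  have hlm : lmin ≤ (m : ℝ) := by
    set v : Fin n → ℝ := fun j => A ⟨0, hm⟩ j with hv
    have hmem : ∃ u : Fin m → ℝ, A.transpose.mulVec u = v := by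
      refine ⟨Pi.single ⟨0, hm⟩ 1, ?_⟩
      funext j
      simp [Matrix.mulVec, dotProduct, Pi.single_apply, Matrix.transpose_apply, hv]
    have h1 := hlmin2 v hmem
    have h2 : ∑ j, (v j) ^ 2 = 1 := hnorm _
    have h3 : ∀ i, (A.mulVec v i) ^ 2 ≤ 1 := by
      intro i
      have := Finset.sum_mul_sq_le_sq_mul_sq Finset.univ (fun j => A i j) v
      rw [hnorm i, h2, one_mul] at this
      simpa [Matrix.mulVec, dotProduct] using this
    have h4 : ∑ i, (A.mulVec v i) ^ 2 ≤ (m : ℝ) := by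
      calc ∑ i, (A.mulVec v i) ^ 2 ≤ ∑ _i : Fin m, (1 : ℝ) :=
            Finset.sum_le_sum fun i _ => h3 i
        _ = (m : ℝ) := by simp
    rw [h2, mul_one] at h1
    linarith
  have hcnn : (0 : ℝ) ≤ 1 - lmin / m := by
    rw [sub_nonneg, div_le_one hm']
    exact hlm
  -- W depends only on the first k coordinates
  have hWdep : ∀ (k : ℕ) (ω ω' : ℕ → Fin m), (∀ l, l < k → ω l = ω' l) → W ω k = W ω' k := by
    intro k
    induction k with
    | zero => intro ω ω' _; rw [hW0, hW0]
    | succ k ih =>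
      intro ω ω' h
      rw [hWs, hWs, ih ω ω' fun l hl => h l (hl.trans (Nat.lt_succ_self k)),
        h k (Nat.lt_succ_self k)]
  set ext : ∀ k : ℕ, (Fin k → Fin m) → ℕ → Fin m :=
    fun k σ l => if h : l < k then σ ⟨l, h⟩ else ⟨0, hm⟩ with hext
  set T : ℕ → ℝ := fun k => ∑ σ : Fin k → Fin m, d (W (ext k σ) k) with hT
  have hTnn : ∀ k, 0 ≤ T k := fun k => Finset.sum_nonneg fun σ _ => hdnn _
  have hTstep : ∀ k, T (k + 1) ≤ ((m : ℝ) - lmin) * T k := by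
    intro k
    let e : ((Fin k → Fin m) × Fin m) ≃ (Fin (k + 1) → Fin m) :=
      { toFun := fun p => Fin.snoc p.1 p.2
        invFun := fun σ => (Fin.init σ, σ (Fin.last k))
        left_inv := fun p => by simp
        right_inv := fun σ => by simp }
    have hsum : T (k + 1) = ∑ p : (Fin k → Fin m) × Fin m, d (W (ext (k+1) (Fin.snoc p.1 p.2)) (k+1)) := by
      show (∑ σ : Fin (k+1) → Fin m, d (W (ext (k+1) σ) (k+1))) = _
      exact (Equiv.sum_comp e fun σ => d (W (ext (k+1) σ) (k+1))).symm
    have hkey : ∀ (τ : Fin k → Fin m) (i : Fin m),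
        W (ext (k+1) (Fin.snoc τ i)) (k+1) = step i (W (ext k τ) k) := by
      intro τ i
      have hWeq : W (ext (k+1) (Fin.snoc τ i)) k = W (ext k τ) k := by
        apply hWdep
        intro l hl
        simp only [hext]
        rw [dif_pos (hl.trans (Nat.lt_succ_self k)), dif_pos hl]
        have : (⟨l, hl.trans (Nat.lt_succ_self k)⟩ : Fin (k+1)) = Fin.castSucc ⟨l, hl⟩ := rfl
        rw [this, Fin.snoc_castSucc]
      have hlast : ext (k+1) (Fin.snoc τ i) k = i := by
        simp only [hext]
        rw [dif_pos (Nat.lt_succ_self k)]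
        have : (⟨k, Nat.lt_succ_self k⟩ : Fin (k+1)) = Fin.last k := rfl
        rw [this, Fin.snoc_last]
      rw [hWs, hWeq, hlast]
    calc T (k + 1)
        = ∑ p : (Fin k → Fin m) × Fin m, d (step p.2 (W (ext k p.1) k)) := by
          rw [hsum]
          exact Finset.sum_congr rfl fun p _ => by rw [hkey p.1 p.2]
      _ = ∑ τ : Fin k → Fin m, ∑ i : Fin m, d (step i (W (ext k τ) k)) := by
          rw [Fintype.sum_prod_type]
      _ ≤ ∑ τ : Fin k → Fin m, ((m : ℝ) - lmin) * d (W (ext k τ) k) :=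
          Finset.sum_le_sum fun τ _ => onestep _
      _ = ((m : ℝ) - lmin) * T k := by
          show _ = ((m : ℝ) - lmin) * ∑ σ : Fin k → Fin m, d (W (ext k σ) k)
          rw [Finset.mul_sum]
  have main : ∀ k, ((m : ℝ) ^ k)⁻¹ * T k ≤ (1 - lmin / m) ^ k * d w0 := by
    intro k
    induction k with
    | zero =>
      have hT0 : T 0 = d w0 := by
        show (∑ σ : Fin 0 → Fin m, d (W (ext 0 σ) 0)) = d w0
        rw [Fintype.sum_unique fun σ : Fin 0 → Fin m => d (W (ext 0 σ) 0), hW0]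
      simp [hT0]
    | succ k ih =>
      have h1 : ((m : ℝ) ^ (k+1))⁻¹ * T (k + 1) ≤ ((m : ℝ) ^ (k+1))⁻¹ * (((m : ℝ) - lmin) * T k) :=
        mul_le_mul_of_nonneg_left (hTstep k) (by positivity)
      have h2 : ((m : ℝ) ^ (k+1))⁻¹ * (((m : ℝ) - lmin) * T k)
          = (1 - lmin / m) * (((m : ℝ) ^ k)⁻¹ * T k) := by
        have hmne : (m:ℝ) ≠ 0 := ne_of_gt hm'
        have hc' : (1 - lmin / (m:ℝ)) = ((m:ℝ) - lmin) * (m:ℝ)⁻¹ := by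
          rw [sub_mul, mul_inv_cancel₀ hmne, div_eq_mul_inv]
        rw [pow_succ, mul_inv, hc']
        ring
      have h3 : (1 - lmin / m) * (((m : ℝ) ^ k)⁻¹ * T k) ≤ (1 - lmin / m) * ((1 - lmin / m) ^ k * d w0) :=
        mul_le_mul_of_nonneg_left ih hcnn
      calc ((m : ℝ) ^ (k+1))⁻¹ * T (k + 1) ≤ (1 - lmin / m) * (((m : ℝ) ^ k)⁻¹ * T k) := by
            rw [← h2]; exact h1
        _ ≤ (1 - lmin / m) * ((1 - lmin / m) ^ k * d w0) := h3
        _ = (1 - lmin / m) ^ (k+1) * d w0 := by ring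
  exact main k
end

section
/- If a symmetric positive semidefinite matrix H is diagonally dominant (H_{ii} ≥ Σ_{j≠i} |H_{ij}| for all i), then the maximum column Euclidean norm is at most twice the maximum diagonal entry: max_i ‖He_i‖₂ ≤ 2·max_i H_{ii}. -/
/-- For a diagonally dominant symmetric PSD matrix, the maximum column Euclidean norm
is at most twice the maximum diagonal entry. -/
theorem psd_diagonally_dominant_column_bound (n : ℕ) (hn : 0 < n)
    (H : Matrix (Fin n) (Fin n) ℝ)
    (hpsd : H.PosSemidef)
    (hdd : ∀ i, ∑ j ∈ Finset.univ \ {i}, |H i j| ≤ H i i)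
    (Lmax Lres : ℝ)
    (hLmax : IsGreatest {r : ℝ | ∃ i, r = H i i} Lmax)
    (hLres : IsGreatest {r : ℝ | ∃ i, r = Real.sqrt (∑ j, (H j i) ^ 2)} Lres) :
    Lres ≤ 2 * Lmax := by
  obtain ⟨i, hi⟩ := hLres.1
  rw [hi]
  have hsym : ∀ j, H j i = H i j := fun j => by
    have := hpsd.1
    rw [Matrix.IsHermitian] at this
    have := congrFun (congrFun this j) i
    simpa [Matrix.conjTranspose_apply] using this.symm
  have hdiag : 0 ≤ H i i := by
    exact hpsd.diag_nonneg
  have h1 : Real.sqrt (∑ j, (H j i) ^ 2) ≤ ∑ j, |H j i| := by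
    have hsq : ∑ j, (H j i) ^ 2 ≤ (∑ j, |H j i|) ^ 2 := by
      calc ∑ j, (H j i) ^ 2 = ∑ j, |H j i| ^ 2 := by simp [sq_abs]
        _ ≤ (∑ j, |H j i|) ^ 2 :=
          Finset.sum_sq_le_sq_sum_of_nonneg (fun j _ => abs_nonneg _)
    calc Real.sqrt (∑ j, (H j i) ^ 2) ≤ Real.sqrt ((∑ j, |H j i|) ^ 2) :=
          Real.sqrt_le_sqrt hsq
      _ = ∑ j, |H j i| := Real.sqrt_sq (Finset.sum_nonneg fun j _ => abs_nonneg _)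
  have h2 : ∑ j, |H j i| ≤ 2 * H i i := by
    have : ∑ j, |H j i| = ∑ j ∈ Finset.univ \ {i}, |H i j| + |H i i| := by
      rw [show (∑ j, |H j i|) = ∑ j, |H i j| by simp [hsym],
        Finset.sum_eq_sum_sdiff_singleton_add (Finset.mem_univ i)]
    rw [this, abs_of_nonneg hdiag]
    linarith [hdd i]
  have h3 : H i i ≤ Lmax := hLmax.2 ⟨i, rfl⟩
  linarith
end

section
/- Randomized proximal coordinate descent on h = f + λΩ with separable convex Ω, σ-strongly convex smooth f, and steplength 1/L_max satisfies E[h(x^k)] - h* ≤ (1 - σ/(n·L_max))^k (h(x⁰) - h*). -/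
private def RPCDemb (n : ℕ) (hn : 0 < n) (m : ℕ) (ω : Fin m → Fin n) : ℕ → Fin n :=
  fun j => if hj : j < m then ω ⟨j, hj⟩ else ⟨0, hn⟩

private lemma RPCD_lineDeriv {n : ℕ} (f : EuclideanSpace ℝ (Fin n) → ℝ)
    (g : EuclideanSpace ℝ (Fin n) → EuclideanSpace ℝ (Fin n))
    (hdiff : ∀ x, HasGradientAt f (g x) x)
    (x v : EuclideanSpace ℝ (Fin n)) (s : ℝ) :
    HasDerivAt (fun s : ℝ => f (x + s • v)) (inner ℝ (g (x + s • v)) v : ℝ) s := by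
  have h1 : HasDerivAt (fun s : ℝ => x + s • v) v s := by
    simpa using ((hasDerivAt_id s).smul_const v).const_add x
  exact ((hdiff (x + s • v)).hasFDerivAt).comp_hasDerivAt s h1

private lemma RPCD_coord_descent {n : ℕ} (f : EuclideanSpace ℝ (Fin n) → ℝ)
    (g : EuclideanSpace ℝ (Fin n) → EuclideanSpace ℝ (Fin n))
    (hdiff : ∀ x, HasGradientAt f (g x) x)
    (Lmax : ℝ)
    (hLip : ∀ (x : EuclideanSpace ℝ (Fin n)) (i : Fin n) (t : ℝ),
      |g (x + t • EuclideanSpace.single i 1) i - g x i| ≤ Lmax * |t|)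
    (x : EuclideanSpace ℝ (Fin n)) (i : Fin n) (t : ℝ) :
    f (x + t • EuclideanSpace.single i 1) ≤ f x + t * g x i + Lmax / 2 * t ^ 2 := by
  set v : EuclideanSpace ℝ (Fin n) := t • EuclideanSpace.single i 1 with hv
  set φ : ℝ → ℝ := fun s => f (x + s • v) - s * (t * g x i) - Lmax / 2 * t ^ 2 * s ^ 2 with hφ
  have hinner : ∀ y : EuclideanSpace ℝ (Fin n), (inner ℝ (g y) v : ℝ) = t * g y i := by
    intro y
    simp [hv, real_inner_smul_right, mul_comm, EuclideanSpace.inner_single_right]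
  have hd : ∀ s : ℝ, HasDerivAt φ
      (t * g (x + s • v) i - t * g x i - Lmax / 2 * t ^ 2 * (2 * s)) s := by
    intro s
    have h1 := RPCD_lineDeriv f g hdiff x v s
    rw [hinner] at h1
    have h2 : HasDerivAt (fun s : ℝ => s * (t * g x i)) (t * g x i) s := by
      simpa using (hasDerivAt_id s).mul_const (t * g x i)
    have h3 := HasDerivAt.const_mul (Lmax / 2 * t ^ 2) (hasDerivAt_pow 2 s)
    rw [pow_one] at h3
    exact (h1.sub h2).sub h3
  have key : φ 1 ≤ φ 0 := by
    have hanti : AntitoneOn φ (Set.Icc 0 1) := by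
      apply antitoneOn_of_deriv_nonpos (convex_Icc 0 1)
      · exact fun s _ => (hd s).continuousAt.continuousWithinAt
      · exact fun s _ => ((hd s).differentiableAt).differentiableWithinAt
      · intro s hs
        rw [interior_Icc] at hs
        rw [(hd s).deriv]
        have hs0 : 0 ≤ s := le_of_lt hs.1
        have hb : |g (x + (s * t) • EuclideanSpace.single i 1) i - g x i| ≤ Lmax * |s * t| :=
          hLip x i (s * t)
        have hsv : s • v = (s * t) • EuclideanSpace.single i 1 := by
          rw [hv, smul_smul]
        rw [hsv]
        have h1 : t * g (x + (s * t) • EuclideanSpace.single i 1) i - t * g x i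
            ≤ Lmax * t ^ 2 * s := by
          calc t * g (x + (s * t) • EuclideanSpace.single i 1) i - t * g x i
              = t * (g (x + (s * t) • EuclideanSpace.single i 1) i - g x i) := by ring
            _ ≤ |t * (g (x + (s * t) • EuclideanSpace.single i 1) i - g x i)| := le_abs_self _
            _ = |t| * |g (x + (s * t) • EuclideanSpace.single i 1) i - g x i| := abs_mul _ _
            _ ≤ |t| * (Lmax * |s * t|) := mul_le_mul_of_nonneg_left hb (abs_nonneg _)
            _ = Lmax * t ^ 2 * s := by
                rw [abs_mul, abs_of_nonneg hs0,
                  show |t| * (Lmax * (s * |t|)) = Lmax * (|t| ^ 2) * s by ring, sq_abs]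
        nlinarith [h1]
    exact hanti (by norm_num) (by norm_num) (by norm_num)
  simp only [hφ, one_smul, zero_smul, add_zero] at key
  linarith [key]

private lemma RPCD_sigma_le_Lmax {n : ℕ} (hn : 0 < n) (f : EuclideanSpace ℝ (Fin n) → ℝ)
    (g : EuclideanSpace ℝ (Fin n) → EuclideanSpace ℝ (Fin n))
    (σ Lmax : ℝ)
    (hsc : ∀ x y, f x + (inner ℝ (g x) (y - x) : ℝ) + σ / 2 * ‖y - x‖ ^ 2 ≤ f y)
    (hLip : ∀ (x : EuclideanSpace ℝ (Fin n)) (i : Fin n) (t : ℝ),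
      |g (x + t • EuclideanSpace.single i 1) i - g x i| ≤ Lmax * |t|) :
    σ ≤ Lmax := by
  set i : Fin n := ⟨0, hn⟩
  set e : EuclideanSpace ℝ (Fin n) := EuclideanSpace.single i 1 with he
  have h1 := hsc 0 e
  have h2 := hsc e 0
  have hnorm : ‖e‖ = 1 := by simp [he, EuclideanSpace.norm_single]
  have hi1 : (inner ℝ (g 0) (e - 0) : ℝ) = g 0 i := by
    simp [he, EuclideanSpace.inner_single_right]
  have hi2 : (inner ℝ (g e) ((0 : EuclideanSpace ℝ (Fin n)) - e) : ℝ) = -(g e i) := by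
    simp [he, EuclideanSpace.inner_single_right]
  have hn2 : ‖(0 : EuclideanSpace ℝ (Fin n)) - e‖ = 1 := by
    rw [zero_sub, norm_neg, hnorm]
  have hb := hLip 0 i 1
  have hee : (0 : EuclideanSpace ℝ (Fin n)) + (1:ℝ) • e = e := by simp
  rw [hee] at hb
  have hb2 := (abs_le.mp hb).2
  rw [hi1] at h1
  rw [hi2, hn2] at h2
  rw [sub_zero, hnorm] at h1
  simp only [abs_one, mul_one] at hb2
  nlinarith

set_option maxHeartbeats 1000000 in
private lemma RPCD_one_step {n : ℕ}
    (f : EuclideanSpace ℝ (Fin n) → ℝ)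
    (g : EuclideanSpace ℝ (Fin n) → EuclideanSpace ℝ (Fin n))
    (σ Lmax lam : ℝ) (hσ : 0 < σ) (hLmax : 0 < Lmax) (hlam : 0 < lam)
    (hσL : σ ≤ Lmax)
    (hsc : ∀ x y, f x + (inner ℝ (g x) (y - x) : ℝ) + σ / 2 * ‖y - x‖ ^ 2 ≤ f y)
    (hdescent : ∀ (x : EuclideanSpace ℝ (Fin n)) (i : Fin n) (t : ℝ),
      f (x + t • EuclideanSpace.single i 1) ≤ f x + t * g x i + Lmax / 2 * t ^ 2)
    (Om : Fin n → ℝ → ℝ) (hOm : ∀ i, ConvexOn ℝ Set.univ (Om i))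
    (h : EuclideanSpace ℝ (Fin n) → ℝ)
    (hh : ∀ x, h x = f x + lam * ∑ i, Om i (x i))
    (xstar : EuclideanSpace ℝ (Fin n))
    (st : Fin n → EuclideanSpace ℝ (Fin n) → ℝ)
    (hst : ∀ i x (χ : ℝ),
      (st i x - x i) * g x i + Lmax / 2 * (st i x - x i) ^ 2 + lam * Om i (st i x)
        ≤ (χ - x i) * g x i + Lmax / 2 * (χ - x i) ^ 2 + lam * Om i χ)
    (x : EuclideanSpace ℝ (Fin n)) :
    ∑ i, h (x + (st i x - x i) • EuclideanSpace.single i 1)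
      ≤ ((n : ℝ) - σ / Lmax) * h x + (σ / Lmax) * h xstar := by
  set α : ℝ := σ / Lmax with hα
  have hα0 : 0 < α := div_pos hσ hLmax
  have hα1 : α ≤ 1 := (div_le_one hLmax).mpr hσL
  have hLα : Lmax / 2 * α ^ 2 = σ * α / 2 := by
    field_simp [hα]
    rw [hα]; field_simp
  have hi : ∀ i : Fin n,
      h (x + (st i x - x i) • EuclideanSpace.single i 1)
        ≤ h x + α * ((xstar i - x i) * g x i) + σ * α / 2 * (xstar i - x i) ^ 2
          + lam * α * (Om i (xstar i) - Om i (x i)) := by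
    intro i
    set d : ℝ := st i x - x i with hd
    set y : EuclideanSpace ℝ (Fin n) := x + d • EuclideanSpace.single i 1 with hy
    have hcoord : ∀ j : Fin n, y j = if j = i then st i x else x j := by
      intro j
      have : y j = x j + (if j = i then d else 0) := by
        simp [hy, EuclideanSpace.single_apply]
      rw [this]
      by_cases hij : j = i
      · subst hij; simp [hd]
      · simp [hij]
    have hOmsum : ∑ j, Om j (y j) = (∑ j, Om j (x j)) + (Om i (st i x) - Om i (x i)) := by
      have key : ∑ j, (Om j (y j) - Om j (x j)) = Om i (st i x) - Om i (x i) := by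
        rw [Finset.sum_eq_single i]
        · rw [hcoord i]; simp
        · intro j _ hji
          rw [hcoord j]; simp [hji]
        · intro habs; exact absurd (Finset.mem_univ i) habs
      have h2 := Finset.sum_sub_distrib (s := Finset.univ)
        (f := fun j => Om j (y j)) (g := fun j => Om j (x j))
      rw [h2] at key
      linarith
    have hfy : f y ≤ f x + d * g x i + Lmax / 2 * d ^ 2 := hdescent x i d
    set c : ℝ := x i + α * (xstar i - x i) with hc
    have hopt := hst i x c
    have hcx : c - x i = α * (xstar i - x i) := by rw [hc]; ring
    have hconv : lam * Om i c ≤ lam * Om i (x i) + lam * α * (Om i (xstar i) - Om i (x i)) := by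
      have hcv := (hOm i).2 (Set.mem_univ (x i)) (Set.mem_univ (xstar i))
        (by linarith : (0:ℝ) ≤ 1 - α) hα0.le (by ring)
      simp only [smul_eq_mul] at hcv
      rw [show (1 - α) * x i + α * xstar i = c by rw [hc]; ring] at hcv
      have hm := mul_le_mul_of_nonneg_left hcv hlam.le
      calc lam * Om i c ≤ lam * ((1 - α) * Om i (x i) + α * Om i (xstar i)) := hm
        _ = lam * Om i (x i) + lam * α * (Om i (xstar i) - Om i (x i)) := by ring
    rw [hcx] at hopt
    have h1 : α * (xstar i - x i) * g x i + Lmax / 2 * (α * (xstar i - x i)) ^ 2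
        = α * ((xstar i - x i) * g x i) + σ * α / 2 * (xstar i - x i) ^ 2 := by
      rw [show Lmax / 2 * (α * (xstar i - x i)) ^ 2
          = Lmax / 2 * α ^ 2 * (xstar i - x i) ^ 2 by ring, hLα]
      ring
    rw [h1] at hopt
    have e : lam * ((∑ j, Om j (x j)) + (Om i (st i x) - Om i (x i)))
        = lam * (∑ j, Om j (x j)) + lam * Om i (st i x) - lam * Om i (x i) := by ring
    rw [hh y, hh x, hOmsum, e]
    linarith
  calc ∑ i, h (x + (st i x - x i) • EuclideanSpace.single i 1)
      ≤ ∑ i : Fin n, (h x + α * ((xstar i - x i) * g x i)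
          + σ * α / 2 * (xstar i - x i) ^ 2
          + lam * α * (Om i (xstar i) - Om i (x i))) :=
        Finset.sum_le_sum fun i _ => hi i
    _ = (n : ℝ) * h x + α * (inner ℝ (g x) (xstar - x) : ℝ)
          + σ * α / 2 * ‖xstar - x‖ ^ 2
          + lam * α * ((∑ i, Om i (xstar i)) - ∑ i, Om i (x i)) := by
        have hA : (inner ℝ (g x) (xstar - x) : ℝ) = ∑ i, (xstar i - x i) * g x i := by
          simp only [PiLp.inner_apply, RCLike.inner_apply, conj_trivial]
          exact Finset.sum_congr rfl fun i _ => by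
            simp only [PiLp.sub_apply]
        have hB : ‖xstar - x‖ ^ 2 = ∑ i, (xstar i - x i) ^ 2 := by
          rw [← real_inner_self_eq_norm_sq]
          simp only [PiLp.inner_apply, RCLike.inner_apply, conj_trivial]
          exact Finset.sum_congr rfl fun i _ => by simp only [PiLp.sub_apply, sq]
        rw [hA, hB]
        rw [Finset.sum_add_distrib, Finset.sum_add_distrib, Finset.sum_add_distrib,
          ← Finset.mul_sum, ← Finset.mul_sum, ← Finset.mul_sum, Finset.sum_sub_distrib,
          Finset.sum_const, Finset.card_univ, Fintype.card_fin, nsmul_eq_mul]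
    _ ≤ ((n : ℝ) - α) * h x + α * h xstar := by
        have hsc' := hsc x xstar
        have hsc'' : (inner ℝ (g x) (xstar - x) : ℝ) + σ / 2 * ‖xstar - x‖ ^ 2
            ≤ f xstar - f x := by linarith
        have P := mul_le_mul_of_nonneg_left hsc'' hα0.le
        have P' : α * (inner ℝ (g x) (xstar - x) : ℝ) + σ * α / 2 * ‖xstar - x‖ ^ 2
            ≤ α * f xstar - α * f x := by
          calc α * (inner ℝ (g x) (xstar - x) : ℝ) + σ * α / 2 * ‖xstar - x‖ ^ 2
              = α * ((inner ℝ (g x) (xstar - x) : ℝ) + σ / 2 * ‖xstar - x‖ ^ 2) := by ring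
            _ ≤ α * (f xstar - f x) := P
            _ = α * f xstar - α * f x := by ring
        have e1 : ((n : ℝ) - α) * h x = (n : ℝ) * h x - α * h x := by ring
        have e2 : α * h xstar - α * h x
            = α * f xstar - α * f x
              + (lam * α * (∑ i, Om i (xstar i)) - lam * α * (∑ i, Om i (x i))) := by
          rw [hh xstar, hh x]; ring
        have e3 : lam * α * ((∑ i, Om i (xstar i)) - ∑ i, Om i (x i))
            = lam * α * (∑ i, Om i (xstar i)) - lam * α * (∑ i, Om i (x i)) := by ring
        rw [e1, e3]
        linarith

/-- Linear rate of randomized proximal coordinate descent on `h = f + λΩ` with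
separable convex `Ω` and σ-strongly convex smooth `f`:
`E[h(x^k)] - h* ≤ (1 - σ/(n Lmax))^k (h(x⁰) - h*)`. -/
theorem randomized_proximal_cd_linear_rate (n : ℕ) (hn : 0 < n)
    (f : EuclideanSpace ℝ (Fin n) → ℝ)
    (g : EuclideanSpace ℝ (Fin n) → EuclideanSpace ℝ (Fin n))
    (hdiff : ∀ x, HasGradientAt f (g x) x)
    (σ Lmax lam : ℝ) (hσ : 0 < σ) (hLmax : 0 < Lmax) (hlam : 0 < lam)
    (hsc : ∀ x y, f x + (inner ℝ (g x) (y - x) : ℝ) + σ / 2 * ‖y - x‖ ^ 2 ≤ f y)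
    (hLip : ∀ (x : EuclideanSpace ℝ (Fin n)) (i : Fin n) (t : ℝ),
      |g (x + t • EuclideanSpace.single i 1) i - g x i| ≤ Lmax * |t|)
    (Om : Fin n → ℝ → ℝ) (hOm : ∀ i, ConvexOn ℝ Set.univ (Om i))
    (h : EuclideanSpace ℝ (Fin n) → ℝ)
    (hh : ∀ x, h x = f x + lam * ∑ i, Om i (x i))
    (xstar : EuclideanSpace ℝ (Fin n))
    (hmin : ∀ x, h xstar ≤ h x)
    (huniq : ∀ x, h x = h xstar → x = xstar)
    -- `st i x` is the minimizer of the scalar proximal subproblem along coordinate `i`: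
    (st : Fin n → EuclideanSpace ℝ (Fin n) → ℝ)
    (hst : ∀ i x (χ : ℝ),
      (st i x - x i) * g x i + Lmax / 2 * (st i x - x i) ^ 2 + lam * Om i (st i x)
        ≤ (χ - x i) * g x i + Lmax / 2 * (χ - x i) ^ 2 + lam * Om i χ)
    (x0 : EuclideanSpace ℝ (Fin n))
    (X : (ℕ → Fin n) → ℕ → EuclideanSpace ℝ (Fin n))
    (hX0 : ∀ ω, X ω 0 = x0)
    (hXs : ∀ ω k, X ω (k + 1) =
      X ω k + (st (ω k) (X ω k) - X ω k (ω k)) • EuclideanSpace.single (ω k) 1)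
    (k : ℕ) :
    ((n : ℝ) ^ k)⁻¹ *
        (∑ ω : Fin k → Fin n,
          h (X (fun j => if hj : j < k then ω ⟨j, hj⟩ else ⟨0, hn⟩) k)) - h xstar
      ≤ (1 - σ / (n * Lmax)) ^ k * (h x0 - h xstar) := by
  have hσL : σ ≤ Lmax := RPCD_sigma_le_Lmax hn f g σ Lmax hsc hLip
  have hdescent := RPCD_coord_descent f g hdiff Lmax hLip
  set α : ℝ := σ / Lmax with hα
  have hα0 : 0 < α := div_pos hσ hLmax
  have hα1 : α ≤ 1 := (div_le_one hLmax).mpr hσL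
  have hnpos : (0:ℝ) < n := Nat.cast_pos.mpr hn
  have hn1 : (1:ℝ) ≤ n := Nat.one_le_cast.mpr hn
  -- rewrite the rate constant
  have hrate : 1 - σ / (n * Lmax) = 1 - α / n := by
    rw [hα, div_div, mul_comm (n:ℝ) Lmax]
  have hβ0 : 0 ≤ 1 - α / n := by
    have : α / n ≤ 1 := by
      rw [div_le_one hnpos]; linarith
    linarith
  -- agreement lemma
  have hagree : ∀ m (ω ω' : ℕ → Fin n), (∀ j, j < m → ω j = ω' j) → X ω m = X ω' m := by
    intro m
    induction m with
    | zero => intro ω ω' _; rw [hX0, hX0]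
    | succ m ih =>
      intro ω ω' hjj
      have h1 : X ω m = X ω' m := ih ω ω' fun j hj => hjj j (Nat.lt_succ_of_lt hj)
      rw [hXs, hXs, h1, hjj m (Nat.lt_succ_self m)]
  -- key recursion identity
  have hXsnoc : ∀ (m : ℕ) (τ : Fin m → Fin n) (i : Fin n),
      X (RPCDemb n hn (m+1) (Fin.snoc τ i)) (m+1)
        = X (RPCDemb n hn m τ) m
          + (st i (X (RPCDemb n hn m τ) m) - X (RPCDemb n hn m τ) m i)
              • EuclideanSpace.single i 1 := by
    intro m τ i
    have hk : RPCDemb n hn (m+1) (Fin.snoc τ i) m = i := by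
      simp only [RPCDemb, Nat.lt_succ_self, dif_pos]
      have he : (⟨m, Nat.lt_succ_self m⟩ : Fin (m+1)) = Fin.last m := rfl
      rw [he, Fin.snoc_last]
    have hXeq : X (RPCDemb n hn (m+1) (Fin.snoc τ i)) m = X (RPCDemb n hn m τ) m := by
      apply hagree m
      intro j hj
      simp only [RPCDemb, hj, Nat.lt_succ_of_lt hj, dif_pos]
      have he : (⟨j, Nat.lt_succ_of_lt hj⟩ : Fin (m+1)) = Fin.castSucc ⟨j, hj⟩ := rfl
      rw [he, Fin.snoc_castSucc]
    rw [hXs, hk, hXeq]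
  -- main induction
  suffices H : ∀ m : ℕ,
      ((n : ℝ) ^ m)⁻¹ * (∑ ω : Fin m → Fin n, h (X (RPCDemb n hn m ω) m)) - h xstar
        ≤ (1 - σ / (n * Lmax)) ^ m * (h x0 - h xstar) by
    exact H k
  intro m
  induction m with
  | zero =>
    simp only [pow_zero, inv_one, one_mul]
    rw [Fintype.sum_subsingleton _ (fun j : Fin 0 => j.elim0)]
    rw [hX0]
  | succ m ih =>
    have hS : (∑ ω : Fin (m+1) → Fin n, h (X (RPCDemb n hn (m+1) ω) (m+1)))
        ≤ ((n : ℝ) - α) * (∑ τ : Fin m → Fin n, h (X (RPCDemb n hn m τ) m))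
          + (n : ℝ) ^ m * (α * h xstar) := by
      rw [← Equiv.sum_comp (Fin.snocEquiv fun _ => Fin n)
        (fun ω => h (X (RPCDemb n hn (m+1) ω) (m+1))), Fintype.sum_prod_type]
      have step : ∀ τ : Fin m → Fin n,
          ∑ i : Fin n, h (X (RPCDemb n hn (m+1) (Fin.snoc τ i)) (m+1))
            ≤ ((n : ℝ) - α) * h (X (RPCDemb n hn m τ) m) + α * h xstar := by
        intro τ
        have := RPCD_one_step f g σ Lmax lam hσ hLmax hlam hσL hsc hdescent Om hOm h hh
          xstar st hst (X (RPCDemb n hn m τ) m)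
        calc ∑ i : Fin n, h (X (RPCDemb n hn (m+1) (Fin.snoc τ i)) (m+1))
            = ∑ i : Fin n, h (X (RPCDemb n hn m τ) m
                + (st i (X (RPCDemb n hn m τ) m) - X (RPCDemb n hn m τ) m i)
                    • EuclideanSpace.single i 1) :=
              Finset.sum_congr rfl fun i _ => by rw [hXsnoc m τ i]
          _ ≤ ((n : ℝ) - α) * h (X (RPCDemb n hn m τ) m) + α * h xstar := this
      calc ∑ i : Fin n, ∑ τ : Fin m → Fin n,
              h (X (RPCDemb n hn (m+1) (Fin.snoc τ i)) (m+1))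
          = ∑ τ : Fin m → Fin n, ∑ i : Fin n,
              h (X (RPCDemb n hn (m+1) (Fin.snoc τ i)) (m+1)) := Finset.sum_comm
        _ ≤ ∑ τ : Fin m → Fin n,
              (((n : ℝ) - α) * h (X (RPCDemb n hn m τ) m) + α * h xstar) :=
            Finset.sum_le_sum fun τ _ => step τ
        _ = ((n : ℝ) - α) * (∑ τ : Fin m → Fin n, h (X (RPCDemb n hn m τ) m))
              + (n : ℝ) ^ m * (α * h xstar) := by
            rw [Finset.sum_add_distrib, ← Finset.mul_sum, Finset.sum_const,
              Finset.card_univ, nsmul_eq_mul]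
            congr 2
            simp [Fintype.card_fun]
    have hpk1 : (0:ℝ) < (n : ℝ) ^ (m+1) := pow_pos hnpos _
    have hinv : (0:ℝ) ≤ ((n : ℝ) ^ (m+1))⁻¹ := (inv_pos.mpr hpk1).le
    have step1 : ((n : ℝ) ^ (m+1))⁻¹ *
        (∑ ω : Fin (m+1) → Fin n, h (X (RPCDemb n hn (m+1) ω) (m+1))) - h xstar
        ≤ (1 - α / n) *
          (((n : ℝ) ^ m)⁻¹ * (∑ τ : Fin m → Fin n, h (X (RPCDemb n hn m τ) m)) - h xstar) := by
      have hmul := mul_le_mul_of_nonneg_left hS hinv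
      have hid : ((n : ℝ) ^ (m+1))⁻¹ *
          (((n : ℝ) - α) * (∑ τ : Fin m → Fin n, h (X (RPCDemb n hn m τ) m))
            + (n : ℝ) ^ m * (α * h xstar)) - h xstar
          = (1 - α / n) *
            (((n : ℝ) ^ m)⁻¹ * (∑ τ : Fin m → Fin n, h (X (RPCDemb n hn m τ) m)) - h xstar) := by
        have hne : (n : ℝ) ≠ 0 := ne_of_gt hnpos
        have hpne : ((n : ℝ)) ^ m ≠ 0 := pow_ne_zero _ hne
        field_simp
        ring
      linarith [hmul, hid ▸ le_refl (((n : ℝ) ^ (m+1))⁻¹ *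
          (((n : ℝ) - α) * (∑ τ : Fin m → Fin n, h (X (RPCDemb n hn m τ) m))
            + (n : ℝ) ^ m * (α * h xstar)) - h xstar)]
    calc ((n : ℝ) ^ (m+1))⁻¹ *
          (∑ ω : Fin (m+1) → Fin n, h (X (RPCDemb n hn (m+1) ω) (m+1))) - h xstar
        ≤ (1 - α / n) *
          (((n : ℝ) ^ m)⁻¹ * (∑ τ : Fin m → Fin n, h (X (RPCDemb n hn m τ) m)) - h xstar) :=
          step1
      _ ≤ (1 - α / n) * ((1 - σ / (n * Lmax)) ^ m * (h x0 - h xstar)) :=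
          mul_le_mul_of_nonneg_left ih hβ0
      _ = (1 - σ / (n * Lmax)) ^ (m+1) * (h x0 - h xstar) := by
          rw [hrate, pow_succ]
          ring
end

section
/- For σ-strongly convex f with coordinate Lipschitz constant L_max and the surrogate H(x,z) := f(x) + ∇f(x)ᵀ(z-x) + (L_max/2)‖z-x‖² + λΩ(z), the minimum value satisfies min_z H(x,z) ≤ (σ/L_max)·h* + (1 - σ/L_max)·h(x), where h = f + λΩ and h* = min h. -/
/-- The proximal surrogate `H(x,z) = f(x) + ⟪∇f(x), z-x⟫ + (Lmax/2)‖z-x‖² + λΩ(z)`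
satisfies `min_z H(x,z) ≤ (σ/Lmax) h* + (1 - σ/Lmax) h(x)`. -/
theorem surrogate_min_bound (n : ℕ)
    (f : EuclideanSpace ℝ (Fin n) → ℝ)
    (g : EuclideanSpace ℝ (Fin n) → EuclideanSpace ℝ (Fin n))
    (hdiff : ∀ x, HasGradientAt f (g x) x)
    (σ Lmax lam : ℝ) (hσ : 0 < σ) (hσL : σ ≤ Lmax) (hlam : 0 < lam)
    (hsc : ∀ x y, f x + (inner ℝ (g x) (y - x) : ℝ) + σ / 2 * ‖y - x‖ ^ 2 ≤ f y)
    (Om : EuclideanSpace ℝ (Fin n) → ℝ) (hOm : ConvexOn ℝ Set.univ Om)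
    (h : EuclideanSpace ℝ (Fin n) → ℝ)
    (hh : ∀ x, h x = f x + lam * Om x)
    (xstar : EuclideanSpace ℝ (Fin n)) (hmin : ∀ x, h xstar ≤ h x)
    (x : EuclideanSpace ℝ (Fin n)) :
    ∃ z : EuclideanSpace ℝ (Fin n),
      f x + (inner ℝ (g x) (z - x) : ℝ) + Lmax / 2 * ‖z - x‖ ^ 2 + lam * Om z
        ≤ σ / Lmax * h xstar + (1 - σ / Lmax) * h x := by
  have hL : 0 < Lmax := hσ.trans_le hσL
  set α : ℝ := σ / Lmax with hα
  have hα0 : 0 ≤ α := by positivity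
  have hα1 : α ≤ 1 := by rw [hα, div_le_one hL]; exact hσL
  have hαL : α * Lmax = σ := div_mul_cancel₀ σ hL.ne'
  set z := α • xstar + (1 - α) • x with hz
  refine ⟨z, ?_⟩
  have hzx : z - x = α • (xstar - x) := by rw [hz]; module
  have hinner : (inner ℝ (g x) (z - x) : ℝ) = α * inner ℝ (g x) (xstar - x) := by
    rw [hzx, real_inner_smul_right]
  have hnorm : ‖z - x‖ ^ 2 = α ^ 2 * ‖xstar - x‖ ^ 2 := by
    rw [hzx, norm_smul, mul_pow, Real.norm_eq_abs, sq_abs]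
  have hzs : xstar - z = (1 - α) • (xstar - x) := by rw [hz]; module
  have hxz : x - z = (-α) • (xstar - x) := by rw [hz]; module
  have h1 := hsc x z
  rw [hinner, hnorm] at h1
  have h2 : f z ≤ α * f xstar + (1 - α) * f x
      - σ / 2 * (α * (1 - α)) * ‖xstar - x‖ ^ 2 := by
    have ha := hsc z xstar
    have hb := hsc z x
    rw [hzs, real_inner_smul_right, norm_smul, Real.norm_eq_abs,
      abs_of_nonneg (by linarith : (0:ℝ) ≤ 1 - α), mul_pow] at ha
    rw [hxz, real_inner_smul_right, norm_smul, Real.norm_eq_abs, abs_neg,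
      abs_of_nonneg hα0, mul_pow] at hb
    nlinarith [mul_le_mul_of_nonneg_left ha hα0,
      mul_le_mul_of_nonneg_left hb (by linarith : (0:ℝ) ≤ 1 - α)]
  have hOmz : Om z ≤ α * Om xstar + (1 - α) * Om x := by
    have := hOm.2 (Set.mem_univ xstar) (Set.mem_univ x) hα0
      (by linarith : (0:ℝ) ≤ 1 - α) (by ring)
    simpa [smul_eq_mul] using this
  rw [hinner, hnorm, hh xstar, hh x]
  have hkey : Lmax / 2 * (α ^ 2 * ‖xstar - x‖ ^ 2)
      = σ / 2 * (α * ‖xstar - x‖ ^ 2) := by rw [← hαL]; ring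
  nlinarith [h1, h2, mul_le_mul_of_nonneg_left hOmz hlam.le, hkey]
end

section
/- Gradient descent with constant steplength 1/L on a convex L-smooth function satisfies f(x^k) - f* ≤ 2L·R₀²/k for k ≥ 1. -/
open RealInnerProductSpace Filter

variable {E : Type*} [NormedAddCommGroup E] [InnerProductSpace ℝ E] [CompleteSpace E]

lemma aux_hasDerivAt (f : E → ℝ) (g : E → E) (hdiff : ∀ x, HasGradientAt f (g x) x)
    (u d : E) (t : ℝ) :
    HasDerivAt (fun s : ℝ => f (u + s • d)) ⟪g (u + t • d), d⟫ t := by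
  have hc : HasDerivAt (fun s : ℝ => u + s • d) d t := by
    simpa using ((hasDerivAt_id t).smul_const d).const_add u
  have hf := (hasGradientAt_iff_hasFDerivAt.1 (hdiff (u + t • d)))
  have h2 := hf.comp_hasDerivAt t hc
  simp only [InnerProductSpace.toDual_apply_apply] at h2
  exact h2

lemma aux_descent (f : E → ℝ) (g : E → E) (hdiff : ∀ x, HasGradientAt f (g x) x)
    (L : ℝ) (hL : 0 < L) (hLip : ∀ x y, ‖g x - g y‖ ≤ L * ‖x - y‖) (u d : E) :
    f (u + d) ≤ f u + ⟪g u, d⟫ + L / 2 * ‖d‖ ^ 2 := by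
  have hgcont : Continuous g := by
    apply (LipschitzWith.of_dist_le_mul (K := L.toNNReal) (f := g) ?_).continuous
    intro a b
    rw [Real.coe_toNNReal _ hL.le, dist_eq_norm, dist_eq_norm]
    exact hLip a b
  have hcont : Continuous fun t : ℝ => ⟪g (u + t • d), d⟫ := by
    exact (Continuous.inner (hgcont.comp (by continuity)) continuous_const)
  have hint : f (u + d) - f u = ∫ t in (0:ℝ)..1, ⟪g (u + t • d), d⟫ := by
    have := intervalIntegral.integral_eq_sub_of_hasDerivAt
      (f := fun s : ℝ => f (u + s • d)) (f' := fun t => ⟪g (u + t • d), d⟫)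
      (fun t _ => aux_hasDerivAt f g hdiff u d t)
      (hcont.intervalIntegrable 0 1)
    simpa using this.symm
  have hmono : (∫ t in (0:ℝ)..1, ⟪g (u + t • d), d⟫)
      ≤ ∫ t in (0:ℝ)..1, (⟪g u, d⟫ + L * ‖d‖ ^ 2 * t) := by
    apply intervalIntegral.integral_mono_on (by norm_num)
      (hcont.intervalIntegrable 0 1)
      ((by continuity : Continuous fun t : ℝ => ⟪g u, d⟫ + L * ‖d‖ ^ 2 * t).intervalIntegrable 0 1)
    intro t ht
    have h1 : ⟪g (u + t • d) - g u, d⟫ ≤ ‖g (u + t • d) - g u‖ * ‖d‖ :=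
      real_inner_le_norm _ _
    have h2 : ‖g (u + t • d) - g u‖ ≤ L * (t * ‖d‖) := by
      have := hLip (u + t • d) u
      simpa [norm_smul, abs_of_nonneg ht.1] using this
    have h3 : ⟪g (u + t • d) - g u, d⟫ ≤ L * ‖d‖ ^ 2 * t := by
      calc ⟪g (u + t • d) - g u, d⟫ ≤ ‖g (u + t • d) - g u‖ * ‖d‖ := h1
      _ ≤ L * (t * ‖d‖) * ‖d‖ := by
          apply mul_le_mul_of_nonneg_right h2 (norm_nonneg d)
      _ = L * ‖d‖ ^ 2 * t := by ring
    have := inner_sub_left (𝕜 := ℝ) (g (u + t • d)) (g u) d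
    linarith [h3, this.symm.le, this.le]
  have hval : (∫ t in (0:ℝ)..1, (⟪g u, d⟫ + L * ‖d‖ ^ 2 * t))
      = ⟪g u, d⟫ + L / 2 * ‖d‖ ^ 2 := by
    rw [intervalIntegral.integral_add (intervalIntegrable_const)
      (IntervalIntegrable.const_mul intervalIntegral.intervalIntegrable_id _)]
    rw [intervalIntegral.integral_const, intervalIntegral.integral_const_mul, integral_id]
    simp
    ring
  linarith [hint, hmono, hval]

lemma aux_convex_lb (f : E → ℝ) (g : E → E) (hconv : ConvexOn ℝ Set.univ f)
    (hdiff : ∀ x, HasGradientAt f (g x) x) (u y : E) :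
    f u + ⟪g u, y - u⟫ ≤ f y := by
  set d := y - u with hd
  have hder : HasDerivAt (fun s : ℝ => f (u + s • d)) ⟪g u, d⟫ 0 := by
    simpa using aux_hasDerivAt f g hdiff u d 0
  have hslope : Tendsto (slope (fun s : ℝ => f (u + s • d)) 0) (nhdsWithin 0 {(0:ℝ)}ᶜ)
      (nhds ⟪g u, d⟫) := hasDerivAt_iff_tendsto_slope.1 hder
  have hslope' : Tendsto (slope (fun s : ℝ => f (u + s • d)) 0) (nhdsWithin 0 (Set.Ioi 0))
      (nhds ⟪g u, d⟫) :=
    hslope.mono_left (nhdsWithin_mono _ (fun t ht => ne_of_gt ht))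
  have hbound : ∀ᶠ t in nhdsWithin (0:ℝ) (Set.Ioi 0),
      slope (fun s : ℝ => f (u + s • d)) 0 t ≤ f y - f u := by
    filter_upwards [Ioo_mem_nhdsGT_of_mem (Set.mem_Ico.2 ⟨le_refl (0:ℝ), one_pos⟩)] with t ht
    obtain ⟨ht1, ht2⟩ := ht
    have hcvx := hconv.2 (Set.mem_univ u) (Set.mem_univ y)
      (show (0:ℝ) ≤ 1 - t by linarith) (le_of_lt ht1) (by ring)
    have heq : (1 - t) • u + t • y = u + t • d := by
      rw [hd]; module
    rw [heq] at hcvx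
    simp only [smul_eq_mul] at hcvx
    rw [slope_def_field]
    simp only [zero_smul, add_zero, sub_zero]
    rw [div_le_iff₀ ht1]
    nlinarith [hcvx]
  have := le_of_tendsto hslope' hbound
  linarith


/-- Sublinear rate of gradient descent with constant steplength `1/L` on a convex
`L`-smooth function: `f(x^k) - f* ≤ 2 L R₀² / k`. -/
theorem gradient_descent_sublinear_rate (n : ℕ)
    (f : EuclideanSpace ℝ (Fin n) → ℝ)
    (g : EuclideanSpace ℝ (Fin n) → EuclideanSpace ℝ (Fin n))
    (hconv : ConvexOn ℝ Set.univ f)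
    (hdiff : ∀ x, HasGradientAt f (g x) x)
    (L : ℝ) (hL : 0 < L)
    (hLip : ∀ x y, ‖g x - g y‖ ≤ L * ‖x - y‖)
    (fstar : ℝ) (hfstar : ∀ x, fstar ≤ f x) (hattain : ∃ x, f x = fstar)
    (x0 : EuclideanSpace ℝ (Fin n)) (R0 : ℝ)
    (hR0 : ∀ xstar, f xstar = fstar → ∀ x, f x ≤ f x0 → ‖x - xstar‖ ≤ R0)
    (x : ℕ → EuclideanSpace ℝ (Fin n))
    (hx0 : x 0 = x0)
    (hxs : ∀ k, x (k + 1) = x k - (1 / L) • g (x k))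
    (k : ℕ) (hk : 1 ≤ k) :
    f (x k) - fstar ≤ 2 * L * R0 ^ 2 / k := by
  obtain ⟨xs, hxsf⟩ := hattain
  -- one-step decrease
  have hstep : ∀ j, f (x (j + 1)) ≤ f (x j) - ‖g (x j)‖ ^ 2 / (2 * L) := by
    intro j
    have hd := aux_descent f g hdiff L hL hLip (x j) (-((1 / L) • g (x j)))
    have hxe : x (j + 1) = x j + -((1 / L) • g (x j)) := by rw [hxs j]; abel
    rw [← hxe] at hd
    have hin : ⟪g (x j), -((1 / L) • g (x j))⟫ = -(1 / L) * ‖g (x j)‖ ^ 2 := by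
      rw [inner_neg_right, real_inner_smul_right, real_inner_self_eq_norm_sq]; ring
    have hnm : ‖-((1 / L) • g (x j))‖ ^ 2 = (1 / L) ^ 2 * ‖g (x j)‖ ^ 2 := by
      rw [norm_neg, norm_smul]
      rw [Real.norm_eq_abs, abs_of_pos (by positivity : (0:ℝ) < 1 / L)]
      ring
    rw [hin, hnm] at hd
    have : L / 2 * ((1 / L) ^ 2 * ‖g (x j)‖ ^ 2) - (1 / L) * ‖g (x j)‖ ^ 2
        = -(‖g (x j)‖ ^ 2 / (2 * L)) := by field_simp; ring
    linarith [hd, this]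
  have hmono : ∀ j, f (x (j + 1)) ≤ f (x j) := by
    intro j
    have := hstep j
    have hn : 0 ≤ ‖g (x j)‖ ^ 2 / (2 * L) := by positivity
    linarith
  have hlev : ∀ j, f (x j) ≤ f x0 := by
    intro j
    induction j with
    | zero => rw [hx0]
    | succ m ih => exact le_trans (hmono m) ih
  have hdist : ∀ j, ‖x j - xs‖ ≤ R0 := fun j => hR0 xs hxsf _ (hlev j)
  have hR0nn : 0 ≤ R0 := le_trans (norm_nonneg _) (hdist 0)
  have hgap : ∀ j, f (x j) - fstar ≤ ‖g (x j)‖ * R0 := by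
    intro j
    have hlb := aux_convex_lb f g hconv hdiff (x j) xs
    rw [hxsf] at hlb
    have h1 : ⟪g (x j), xs - x j⟫ = -⟪g (x j), x j - xs⟫ := by
      rw [← inner_neg_right]; congr 1; abel
    have h2 : ⟪g (x j), x j - xs⟫ ≤ ‖g (x j)‖ * ‖x j - xs‖ := real_inner_le_norm _ _
    have h3 : ‖g (x j)‖ * ‖x j - xs‖ ≤ ‖g (x j)‖ * R0 :=
      mul_le_mul_of_nonneg_left (hdist j) (norm_nonneg _)
    nlinarith [hlb, h1, h2, h3, real_inner_le_norm (g (x j)) (xs - x j)]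
  have hΔnn : ∀ j, 0 ≤ f (x j) - fstar := fun j => sub_nonneg.2 (hfstar _)
  rcases eq_or_lt_of_le hR0nn with hR0z | hR0p
  · -- R0 = 0
    have := hgap k
    rw [← hR0z] at this
    simp only [mul_zero] at this
    rw [← hR0z]
    have hkpos : (0:ℝ) < k := by exact_mod_cast hk
    rw [show (0:ℝ)^2 = 0 by ring, mul_zero, zero_div]
    linarith
  · set C := L * R0 ^ 2 with hC
    have hCpos : 0 < C := by positivity
    -- recursion: 2C Δ_{j+1} ≤ 2C Δ_j - Δ_j²
    have hrec : ∀ j, 2 * C * (f (x (j + 1)) - fstar)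
        ≤ 2 * C * (f (x j) - fstar) - (f (x j) - fstar) ^ 2 := by
      intro j
      have h1 := hstep j
      have h2 := hgap j
      have h3 := hΔnn j
      have hgn : 0 ≤ ‖g (x j)‖ := norm_nonneg _
      -- Δ² ≤ ‖g‖² R0²  and ‖g‖²/(2L) relation
      have h4 : (f (x j) - fstar) ^ 2 ≤ ‖g (x j)‖ ^ 2 * R0 ^ 2 := by nlinarith
      have h5 : f (x (j + 1)) - fstar ≤ (f (x j) - fstar) - ‖g (x j)‖ ^ 2 / (2 * L) := by
        linarith
      have h6 : ‖g (x j)‖ ^ 2 / (2 * L) * (2 * L) = ‖g (x j)‖ ^ 2 := by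
        field_simp
      nlinarith [h5, h4, mul_le_mul_of_nonneg_left h5 (by positivity : (0:ℝ) ≤ 2 * C)]
    have hmain : ∀ j : ℕ, 1 ≤ j → ((j:ℝ) + 2) * (f (x j) - fstar) ≤ 2 * C := by
      intro j hj
      induction j with
      | zero => omega
      | succ m ih =>
        rcases Nat.eq_or_lt_of_le hj with h1 | h1
        · -- m + 1 = 1, i.e. m = 0
          have hm : m = 0 := by omega
          subst hm
          have := hrec 0
          have h0 := hΔnn 0
          have h1' := hΔnn 1
          push_cast
          nlinarith [sq_nonneg (f (x 0) - fstar - C)]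
        · have hm1 : 1 ≤ m := by omega
          have ih' := ih hm1
          have hr := hrec m
          have hm0 := hΔnn m
          have hm1' := hΔnn (m + 1)
          have hmr : (0:ℝ) ≤ (m:ℝ) := Nat.cast_nonneg m
          push_cast
          push_cast at ih'
          nlinarith [sq_nonneg (f (x m) - fstar), mul_nonneg hm0 (mul_nonneg hm0 hmr),
            mul_nonneg (mul_nonneg hmr hm0) (sub_nonneg.2 ih'),
            mul_nonneg hm0 (sub_nonneg.2 ih')]
    have hkpos : (0:ℝ) < k := by exact_mod_cast hk
    have hfin := hmain k hk
    have hkk : (k:ℝ) * (f (x k) - fstar) ≤ ((k:ℝ) + 2) * (f (x k) - fstar) := by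
      nlinarith [hΔnn k]
    rw [le_div_iff₀ hkpos]
    calc (f (x k) - fstar) * k = (k:ℝ) * (f (x k) - fstar) := by ring
    _ ≤ 2 * C := le_trans hkk hfin
    _ = 2 * L * R0 ^ 2 := by rw [hC]; ring
end
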